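/- Let A = FᵀF, let x ∈ ℝⁿ with A x ≠ 0, set u = F x/‖F x‖, and let v ∈ ℝʳ satisfy ‖v‖ ≤ 1 and vᵀF x = 0. Then H_x(u,v) = 2I − (Fᵀv)(Fᵀv)ᵀ/(xᵀAx)^{1/2}, and the sandwich 2I ⪰ H_x(u,v) ⪰ ∇²f(x) holds in the Loewner order; i.e. the surrogate curvature H_x(u,v) is tighter than the power-method curvature 2I. -/

import Mathlib

open Matrix

/-- View a plain vector `Fin r → ℝ` as an element of Euclidean space. -/
def toEuc {r : ℕ} (w : Fin r → ℝ) : EuclideanSpace ℝ (Fin r) := WithLp.toLp 2 w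

lemma aux_sandwich {m k : ℕ} (F : Matrix (Fin m) (Fin k) ℝ) (a b : Fin m → ℝ) :
    Fᵀ * vecMulVec a b * F = vecMulVec (Fᵀ *ᵥ a) (Fᵀ *ᵥ b) := by
  rw [vecMulVec_eq Unit, vecMulVec_eq Unit, Matrix.mul_assoc, Matrix.mul_assoc,
    ← replicateRow_vecMul, ← Matrix.mul_assoc, ← replicateCol_mulVec, ← Matrix.mulVec_transpose]

lemma aux_smul2 {m k : ℕ} (c : ℝ) (a : Fin m → ℝ) (b : Fin k → ℝ) :
    vecMulVec (c • a) (c • b) = (c * c) • vecMulVec a b := by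
  ext i j; simp [vecMulVec_apply]; ring

lemma aux_mulVec {m k : ℕ} (a : Fin m → ℝ) (b : Fin k → ℝ) (y : Fin k → ℝ) :
    vecMulVec a b *ᵥ y = (b ⬝ᵥ y) • a := by
  ext i
  simp only [vecMulVec, mulVec, dotProduct, Pi.smul_apply, smul_eq_mul, of_apply,
    Finset.sum_mul, Finset.mul_sum]
  exact Finset.sum_congr rfl (fun _ _ => by ring)

lemma aux_cs {m : ℕ} (a b : Fin m → ℝ) : (a ⬝ᵥ b) ^ 2 ≤ (a ⬝ᵥ a) * (b ⬝ᵥ b) := by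
  have := real_inner_mul_inner_self_le (F := EuclideanSpace ℝ (Fin m))
    (WithLp.toLp 2 a : EuclideanSpace ℝ (Fin m)) (WithLp.toLp 2 b)
  simp only [PiLp.inner_apply, RCLike.inner_apply, conj_trivial] at this
  simpa [dotProduct, sq, mul_comm] using this

lemma aux_dp_nonneg {m : ℕ} (a : Fin m → ℝ) : 0 ≤ a ⬝ᵥ a :=
  Finset.sum_nonneg fun i _ => mul_self_nonneg _

lemma aux_herm {k : ℕ} (g : Fin k → ℝ) : (vecMulVec g g).IsHermitian := by
  show (vecMulVec g g)ᴴ = vecMulVec g g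
  ext i j; simp [vecMulVec_apply, conjTranspose_apply, mul_comm]

lemma aux_herm_smul {k : ℕ} {M : Matrix (Fin k) (Fin k) ℝ} (h : M.IsHermitian) (c : ℝ) :
    (c • M).IsHermitian := by
  show (c • M)ᴴ = c • M
  rw [conjTranspose_smul, h.eq]
  simp

lemma aux_key {m : ℕ} (w v z : Fin m → ℝ) (hw : w ⬝ᵥ w ≠ 0) (hvw : v ⬝ᵥ w = 0)
    (hv : v ⬝ᵥ v ≤ 1) : (v ⬝ᵥ z) ^ 2 + (w ⬝ᵥ z) ^ 2 / (w ⬝ᵥ w) ≤ z ⬝ᵥ z := by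
  set α := (w ⬝ᵥ z) / (w ⬝ᵥ w) with hα
  set z' := z - α • w with hz'def
  have hvz' : v ⬝ᵥ z' = v ⬝ᵥ z := by
    simp [hz'def, dotProduct_sub, dotProduct_smul, hvw]
  have hz' : z' ⬝ᵥ z' = z ⬝ᵥ z - (w ⬝ᵥ z) ^ 2 / (w ⬝ᵥ w) := by
    simp only [hz'def, dotProduct_sub, sub_dotProduct, dotProduct_smul, smul_dotProduct,
      smul_eq_mul, hα, dotProduct_comm w z]
    field_simp
    ring
  have h1 : (v ⬝ᵥ z) ^ 2 ≤ (v ⬝ᵥ v) * (z' ⬝ᵥ z') := by rw [← hvz']; exact aux_cs v z'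
  have h2 : 0 ≤ z' ⬝ᵥ z' := aux_dp_nonneg z'
  have h3 : (v ⬝ᵥ v) * (z' ⬝ᵥ z') ≤ z' ⬝ᵥ z' := by nlinarith [aux_dp_nonneg v]
  linarith [hz' ▸ (h1.trans h3)]

/-- Let `A = FᵀF`, `x` with `A x ≠ 0`, `u = F x/‖F x‖`, and `v` with `‖v‖ ≤ 1`,
`vᵀF x = 0`. Then `H_x(u,v) = 2I − (Fᵀv)(Fᵀv)ᵀ/(xᵀAx)^{1/2}` and the sandwich
`2I ⪰ H_x(u,v) ⪰ ∇²f(x)` holds in the Loewner order. -/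
theorem stmt_10 {r n : ℕ} (hn : 0 < n)
    (F : Matrix (Fin r) (Fin n) ℝ) (A : Matrix (Fin n) (Fin n) ℝ)
    (hAF : A = Fᵀ * F)
    (x : Fin n → ℝ) (hx : A.mulVec x ≠ 0)
    (u v : EuclideanSpace ℝ (Fin r))
    (hu : u = ‖toEuc (F.mulVec x)‖⁻¹ • toEuc (F.mulVec x))
    (hv : ‖v‖ ≤ 1) (hvFx : v ⬝ᵥ F.mulVec x = 0)
    (H hess : Matrix (Fin n) (Fin n) ℝ)
    (hHdef : H = (2 : ℝ) • (1 : Matrix (Fin n) (Fin n) ℝ)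
        - (Real.sqrt (x ⬝ᵥ A.mulVec x))⁻¹ • (Fᵀ * (vecMulVec u u + vecMulVec v v) * F)
        + (Real.sqrt (x ⬝ᵥ A.mulVec x) ^ 3)⁻¹ • vecMulVec (A.mulVec x) (A.mulVec x))
    (hhessdef : hess = (2 : ℝ) • (1 : Matrix (Fin n) (Fin n) ℝ)
        - (Real.sqrt (x ⬝ᵥ A.mulVec x))⁻¹ • A
        + (Real.sqrt (x ⬝ᵥ A.mulVec x) ^ 3)⁻¹ • vecMulVec (A.mulVec x) (A.mulVec x)) :
    H = (2 : ℝ) • (1 : Matrix (Fin n) (Fin n) ℝ)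
        - (Real.sqrt (x ⬝ᵥ A.mulVec x))⁻¹ • vecMulVec (Fᵀ.mulVec v) (Fᵀ.mulVec v) ∧
    ((2 : ℝ) • (1 : Matrix (Fin n) (Fin n) ℝ) - H).PosSemidef ∧
    (H - hess).PosSemidef := by
  set w : Fin r → ℝ := F.mulVec x with hwdef
  set s : ℝ := Real.sqrt (x ⬝ᵥ A.mulVec x) with hsdef
  set g : Fin n → ℝ := Fᵀ.mulVec v with hgdef
  have hAx : A.mulVec x = Fᵀ.mulVec w := by rw [hAF, ← Matrix.mulVec_mulVec]
  have hw0 : w ≠ 0 := by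
    intro h; apply hx; rw [hAx, h, Matrix.mulVec_zero]
  have hq : x ⬝ᵥ A.mulVec x = w ⬝ᵥ w := by
    rw [hAx, Matrix.dotProduct_mulVec, Matrix.vecMul_transpose]
  have hww : 0 < w ⬝ᵥ w := by
    rcases lt_or_eq_of_le (aux_dp_nonneg w) with h | h
    · exact h
    · exact absurd ((dotProduct_self_eq_zero).mp h.symm) hw0
  have hs : 0 < s := by rw [hsdef, hq]; exact Real.sqrt_pos.mpr hww
  have hs2 : s ^ 2 = w ⬝ᵥ w := by
    rw [hsdef, hq]; exact Real.sq_sqrt (aux_dp_nonneg w)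
  have hnorm : ‖toEuc w‖ = s := by
    rw [hsdef, hq, EuclideanSpace.norm_eq]
    congr 1
    simp [toEuc, dotProduct, Real.norm_eq_abs, sq_abs, sq]
  have hvv : vecMulVec u u = (s⁻¹ * s⁻¹) • vecMulVec w w := by
    rw [hu, hnorm]; exact aux_smul2 s⁻¹ w w
  have h3inv : s⁻¹ * (s⁻¹ * s⁻¹) = (s ^ 3)⁻¹ := by
    rw [pow_succ, pow_two, mul_inv, mul_inv]; ring
  have key1 : H = (2 : ℝ) • (1 : Matrix (Fin n) (Fin n) ℝ) - s⁻¹ • vecMulVec g g := by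
    rw [hHdef, hvv, Matrix.mul_add, Matrix.add_mul, Matrix.mul_smul, Matrix.smul_mul,
      aux_sandwich, aux_sandwich, ← hAx, smul_add, smul_smul, h3inv, hgdef]
    abel
  refine ⟨key1, ?_, ?_⟩
  · have h2H : (2 : ℝ) • (1 : Matrix (Fin n) (Fin n) ℝ) - H = s⁻¹ • vecMulVec g g := by
      rw [key1]; abel
    rw [h2H]
    refine posSemidef_iff_dotProduct_mulVec.mpr ⟨aux_herm_smul (aux_herm g) s⁻¹, fun y => ?_⟩
    have : star y ⬝ᵥ (s⁻¹ • vecMulVec g g) *ᵥ y = s⁻¹ * (g ⬝ᵥ y) ^ 2 := by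
      rw [smul_mulVec, aux_mulVec]
      simp [dotProduct_smul, dotProduct_comm y g, sq, star_trivial, mul_assoc]
    rw [this]
    positivity
  · have key3 : H - hess = s⁻¹ • A - s⁻¹ • vecMulVec g g
        - (s ^ 3)⁻¹ • vecMulVec (A.mulVec x) (A.mulVec x) := by
      rw [key1, hhessdef]; abel
    have hA : A.IsHermitian := by
      rw [hAF, ← conjTranspose_eq_transpose_of_trivial]
      exact isHermitian_conjTranspose_mul_self F
    refine posSemidef_iff_dotProduct_mulVec.mpr ⟨?_, ?_⟩
    · rw [key3]
      exact (((aux_herm_smul hA s⁻¹).sub (aux_herm_smul (aux_herm g) s⁻¹)).sub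
        (aux_herm_smul (aux_herm (A.mulVec x)) (s ^ 3)⁻¹))
    · intro y
      set z : Fin r → ℝ := F.mulVec y with hzdef
      have e1 : y ⬝ᵥ A.mulVec y = z ⬝ᵥ z := by
        rw [hAF, ← Matrix.mulVec_mulVec, Matrix.dotProduct_mulVec, Matrix.vecMul_transpose]
      have e2 : (A.mulVec x) ⬝ᵥ y = w ⬝ᵥ z := by
        rw [hAx, Matrix.mulVec_transpose, ← Matrix.dotProduct_mulVec]
      have e3 : g ⬝ᵥ y = v ⬝ᵥ z := by
        rw [hgdef, Matrix.mulVec_transpose, ← Matrix.dotProduct_mulVec]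
      have hvv1 : v ⬝ᵥ v ≤ 1 := by
        have hinner : (v : Fin r → ℝ) ⬝ᵥ v = ‖v‖ ^ 2 := by
          rw [EuclideanSpace.norm_eq, Real.sq_sqrt (by positivity)]
          simp [dotProduct, sq]
        rw [hinner]
        nlinarith [norm_nonneg v]
      have hkey := aux_key w v z hww.ne' hvFx hvv1
      have hval : star y ⬝ᵥ (H - hess) *ᵥ y
          = s⁻¹ * (z ⬝ᵥ z - (v ⬝ᵥ z) ^ 2 - (w ⬝ᵥ z) ^ 2 / (w ⬝ᵥ w)) := by
        rw [key3]
        rw [Matrix.sub_mulVec, Matrix.sub_mulVec, smul_mulVec, smul_mulVec,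
          smul_mulVec, aux_mulVec, aux_mulVec]
        simp only [star_trivial, dotProduct_sub, dotProduct_smul, smul_eq_mul,
          dotProduct_comm y g, e1, e2, e3]
        rw [dotProduct_comm y (A.mulVec x), e2, ← hs2]
        have hs0 : s ≠ 0 := hs.ne'
        field_simp
      rw [hval]
      have hpos : 0 ≤ z ⬝ᵥ z - (v ⬝ᵥ z) ^ 2 - (w ⬝ᵥ z) ^ 2 / (w ⬝ᵥ w) := by linarith
      exact mul_nonneg (inv_nonneg.2 hs.le) hpos
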